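/- Let C ⊆ ℝⁿ be a nonempty compact β-strongly convex set (β > 0), let x ∈ C, let μ ∈ ℝⁿ be a unit vector such that ⟨μ, y − x⟩ ≥ 0 for all y ∈ C, and let R > 0 be such that the closed ball of center x + Rμ and radius R is contained in C. Then 2βR ≤ 1, and for every g ∈ ℝⁿ with g ≠ 0, the tangent-ball gap satisfies R·‖g‖·(1 − ⟨g,μ⟩/‖g‖) ≥ 2βR · max_{y∈C} ⟨g, x − y⟩. -/

import Mathlib

/-- A set `C` is `β`-strongly convex if for all `x, y ∈ C` and `λ ∈ [0,1]`, the
closed ball of center `λx + (1−λ)y` and radius `β λ(1−λ) ‖x−y‖²` is contained in `C`. -/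
def StronglyConvexSet {n : ℕ} (β : ℝ) (C : Set (EuclideanSpace ℝ (Fin n))) : Prop :=
  ∀ x ∈ C, ∀ y ∈ C, ∀ l ∈ Set.Icc (0 : ℝ) 1,
    Metric.closedBall (l • x + (1 - l) • y) (β * (l * (1 - l)) * ‖x - y‖ ^ 2) ⊆ C

/-- Ball–gap comparability at a supported point: if `C` is nonempty, compact and
`β`-strongly convex, `x ∈ C`, `μ` is a unit vector supporting `C` at `x`
(`⟨μ, y − x⟩ ≥ 0` on `C`), and the closed ball `B(x + Rμ, R) ⊆ C` with `R > 0`,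
then `2βR ≤ 1` and for every `g ≠ 0`,
`R ‖g‖ (1 − ⟨g,μ⟩/‖g‖) ≥ 2βR · max_{y∈C} ⟨g, x − y⟩`. -/
theorem ball_gap_comparability {n : ℕ} (β : ℝ) (hβ : 0 < β)
    (C : Set (EuclideanSpace ℝ (Fin n))) (hne : C.Nonempty) (hcomp : IsCompact C)
    (hC : StronglyConvexSet β C)
    (x : EuclideanSpace ℝ (Fin n)) (hx : x ∈ C)
    (μ : EuclideanSpace ℝ (Fin n)) (hμ : ‖μ‖ = 1)
    (hsupp : ∀ y ∈ C, 0 ≤ (inner ℝ μ (y - x) : ℝ))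
    (R : ℝ) (hR : 0 < R) (hball : Metric.closedBall (x + R • μ) R ⊆ C) :
    2 * β * R ≤ 1 ∧
      ∀ g : EuclideanSpace ℝ (Fin n), g ≠ 0 →
        2 * β * R * sSup ((fun y => (inner ℝ g (x - y) : ℝ)) '' C) ≤
          R * ‖g‖ * (1 - (inner ℝ g μ : ℝ) / ‖g‖) := by
  -- Key inequality: the support function dominates β‖x−y‖².
  have key : ∀ y ∈ C, β * ‖x - y‖ ^ 2 ≤ (inner ℝ μ (y - x) : ℝ) := by
    intro y hy
    have hs : (0:ℝ) ≤ inner ℝ μ (y - x) := hsupp y hy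
    have hstep : ∀ l : ℝ, 0 ≤ l → l < 1 → l * (β * ‖x - y‖ ^ 2) ≤ (inner ℝ μ (y - x) : ℝ) := by
      intro l hl0 hl1
      set r : ℝ := β * (l * (1 - l)) * ‖x - y‖ ^ 2 with hrdef
      have hr : 0 ≤ r := by
        have : 0 ≤ l * (1 - l) := mul_nonneg hl0 (by linarith)
        positivity
      have hpmem : (l • x + (1 - l) • y - r • μ) ∈ C := by
        apply hC x hx y hy l ⟨hl0, hl1.le⟩
        simp only [Metric.mem_closedBall, dist_eq_norm]
        have : l • x + (1 - l) • y - r • μ - (l • x + (1 - l) • y) = -(r • μ) := by abel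
        rw [this, norm_neg, norm_smul, hμ, Real.norm_eq_abs, abs_of_nonneg hr, mul_one]
      have hin := hsupp _ hpmem
      have hexp : (inner ℝ μ (l • x + (1 - l) • y - r • μ - x) : ℝ)
          = (1 - l) * (inner ℝ μ (y - x) : ℝ) - r := by
        have hμμ : (inner ℝ μ μ : ℝ) = 1 := by
          rw [real_inner_self_eq_norm_sq, hμ]; norm_num
        simp only [inner_sub_right, inner_add_right, inner_smul_right, hμμ]
        ring
      rw [hexp] at hin
      have h1l : 0 < 1 - l := by linarith
      have : l * (β * ‖x - y‖ ^ 2) * (1 - l) ≤ (inner ℝ μ (y - x) : ℝ) * (1 - l) := by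
        rw [hrdef] at hin; nlinarith
      exact le_of_mul_le_mul_right (by linarith) h1l
    by_contra hcon
    push_neg at hcon
    set s : ℝ := inner ℝ μ (y - x)
    set K : ℝ := β * ‖x - y‖ ^ 2
    have hK : 0 < K := lt_of_le_of_lt hs hcon
    have hl0 : 0 ≤ (s / K + 1) / 2 := by positivity
    have hl1 : (s / K + 1) / 2 < 1 := by
      have : s / K < 1 := (div_lt_one hK).mpr hcon
      linarith
    have hls := hstep _ hl0 hl1
    have heq : (s / K + 1) / 2 * K = (s + K) / 2 := by field_simp
    rw [heq] at hls
    linarith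
  -- Part 1.
  have h2βR : 2 * β * R ≤ 1 := by
    have hy2 : (x + (2 * R) • μ) ∈ C := by
      apply hball
      simp only [Metric.mem_closedBall, dist_eq_norm]
      have : x + (2 * R) • μ - (x + R • μ) = R • μ := by
        rw [two_mul, add_smul]; abel
      rw [this, norm_smul, hμ, Real.norm_eq_abs, abs_of_pos hR, mul_one]
    have hk := key _ hy2
    have h1 : x - (x + (2 * R) • μ) = -((2 * R) • μ) := by abel
    have h2 : x + (2 * R) • μ - x = (2 * R) • μ := by abel
    rw [h1, h2, norm_neg, norm_smul, hμ, Real.norm_eq_abs, abs_of_pos (by linarith),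
      mul_one, inner_smul_right, real_inner_self_eq_norm_sq, hμ] at hk
    nlinarith
  refine ⟨h2βR, fun g hg => ?_⟩
  have hgn : (0:ℝ) < ‖g‖ := norm_pos_iff.mpr hg
  -- Pointwise bound
  have hgμ : (inner ℝ g μ : ℝ) ≤ ‖g‖ := by
    calc (inner ℝ g μ : ℝ) ≤ ‖g‖ * ‖μ‖ := real_inner_le_norm g μ
    _ = ‖g‖ := by rw [hμ, mul_one]
  have hbd : ∀ y ∈ C, (inner ℝ g (x - y) : ℝ) ≤ (‖g‖ - (inner ℝ g μ : ℝ)) / (2 * β) := by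
    intro y hy
    set t : ℝ := ‖x - y‖
    set a : ℝ := ‖g - ‖g‖ • μ‖
    have ha2 : a ^ 2 = 2 * ‖g‖ * (‖g‖ - (inner ℝ g μ : ℝ)) := by
      have := norm_sub_sq_real g (‖g‖ • μ)
      rw [inner_smul_right, norm_smul, Real.norm_eq_abs, abs_of_pos hgn, hμ, mul_one] at this
      simp only [a]; rw [this]; ring
    have hsplit : (inner ℝ g (x - y) : ℝ)
        = (inner ℝ (g - ‖g‖ • μ) (x - y) : ℝ) + ‖g‖ * (inner ℝ μ (x - y) : ℝ) := by
      rw [inner_sub_left, real_inner_smul_left]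
      ring
    have hCS : (inner ℝ (g - ‖g‖ • μ) (x - y) : ℝ) ≤ a * t :=
      real_inner_le_norm _ _
    have hk := key y hy
    have hmxy : (inner ℝ μ (x - y) : ℝ) = -(inner ℝ μ (y - x) : ℝ) := by
      rw [← inner_neg_right]; congr 1; abel
    have h1 : (inner ℝ g (x - y) : ℝ) ≤ a * t - ‖g‖ * (β * t ^ 2) := by
      rw [hsplit, hmxy]
      have : ‖g‖ * (β * t ^ 2) ≤ ‖g‖ * (inner ℝ μ (y - x) : ℝ) :=
        mul_le_mul_of_nonneg_left hk hgn.le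
      linarith
    have ha : 0 ≤ a := norm_nonneg _
    rw [le_div_iff₀ (by positivity)]
    nlinarith [mul_le_mul_of_nonneg_left h1 (by positivity : (0:ℝ) ≤ 2 * β * ‖g‖),
      sq_nonneg (a - 2 * β * ‖g‖ * t), hgn, ha2]
  have hsup : sSup ((fun y => (inner ℝ g (x - y) : ℝ)) '' C)
      ≤ (‖g‖ - (inner ℝ g μ : ℝ)) / (2 * β) := by
    apply Real.sSup_le
    · rintro v ⟨y, hy, rfl⟩; exact hbd y hy
    · have := hbd x hx; exact div_nonneg (by linarith) (by positivity)
  have hfinal : R * ‖g‖ * (1 - (inner ℝ g μ : ℝ) / ‖g‖) = R * (‖g‖ - (inner ℝ g μ : ℝ)) := by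
    field_simp
  rw [hfinal]
  calc 2 * β * R * sSup ((fun y => (inner ℝ g (x - y) : ℝ)) '' C)
      ≤ 2 * β * R * ((‖g‖ - (inner ℝ g μ : ℝ)) / (2 * β)) := by
        apply mul_le_mul_of_nonneg_left hsup (by positivity)
    _ = R * (‖g‖ - (inner ℝ g μ : ℝ)) := by field_simp
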